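/- Let Q = [0,1]×[0,1] ⊆ ℝ², α, β ∈ ℝ, let σ̃, φ̃ : ℝ×ℝ² → ℝ and u = (u₁,u₂) : ℝ×ℝ² → ℝ² be continuously differentiable, and let σ̂ : ℝ² → ℝ be continuously differentiable. Assume that for all t ∈ ℝ and (x,y) ∈ Q: (i) 2∂_t σ̃ + 2u·∇σ̃ + σ̃ div u + 2u·∇σ̂ + σ̂ div u = 0; (ii) 2∂_t u + 2(u·∇)u + σ̃∇σ̃ + σ̃∇σ̂ + σ̂∇σ̃ = −2αu + 2β∇φ̃; and for all t the no-normal-flow condition holds: u₁(t,0,y) = u₁(t,1,y) = 0 for y ∈ [0,1] and u₂(t,x,0) = u₂(t,x,1) = 0 for x ∈ [0,1]. Then the energy E(t) := ∫_Q (σ̃² + |u|²)(t,·) is differentiable in t and for every t satisfies E'(t) + 2α ∫_Q |u|² = ∫_Q σ̃ (u·∇σ̃) − 2∫_Q (u·∇σ̂) σ̃ + ∫_Q (div u) σ̃² + ∫_Q (div u) |u|² + 2β ∫_Q u·∇φ̃, where all spatial integrals are over Q at time t. -/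

import Mathlib

/-- Partial derivative in the time variable of a function of `(t, x, y)`. -/
noncomputable def pt (f : ℝ → ℝ → ℝ → ℝ) : ℝ → ℝ → ℝ → ℝ :=
  fun t x y => deriv (fun s => f s x y) t

/-- Partial derivative in the first space variable of a function of `(t, x, y)`. -/
noncomputable def px (f : ℝ → ℝ → ℝ → ℝ) : ℝ → ℝ → ℝ → ℝ :=
  fun t x y => deriv (fun s => f t s y) x

/-- Partial derivative in the second space variable of a function of `(t, x, y)`. -/
noncomputable def py (f : ℝ → ℝ → ℝ → ℝ) : ℝ → ℝ → ℝ → ℝ :=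
  fun t x y => deriv (fun s => f t x s) y

/-- Partial derivative in the first variable of a function of `(x, y)`. -/
noncomputable def qx (f : ℝ → ℝ → ℝ) : ℝ → ℝ → ℝ :=
  fun x y => deriv (fun s => f s y) x

/-- Partial derivative in the second variable of a function of `(x, y)`. -/
noncomputable def qy (f : ℝ → ℝ → ℝ) : ℝ → ℝ → ℝ :=
  fun x y => deriv (fun s => f x s) y

section helpers
variable {f : ℝ → ℝ → ℝ → ℝ} {g : ℝ → ℝ → ℝ}

lemma hasDerivAt_pt (hf : ContDiff ℝ 1 (fun q : ℝ × ℝ × ℝ => f q.1 q.2.1 q.2.2))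
    (t x y : ℝ) : HasDerivAt (fun s => f s x y) (pt f t x y) t := by
  have hF := (hf.differentiable one_ne_zero (t, x, y)).hasFDerivAt
  have hline : HasDerivAt (fun s : ℝ => ((s, x, y) : ℝ × ℝ × ℝ)) ((1, 0, 0) : ℝ × ℝ × ℝ) t :=
    (hasDerivAt_id t).prodMk ((hasDerivAt_const t x).prodMk (hasDerivAt_const t y))
  have h : HasDerivAt (fun s => f s x y)
      (fderiv ℝ (fun q : ℝ × ℝ × ℝ => f q.1 q.2.1 q.2.2) (t, x, y) ((1:ℝ), (0:ℝ), (0:ℝ))) t :=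
    by have := hF.comp_hasDerivAt t hline; exact this
  unfold pt; rw [h.deriv]; exact h

lemma hasDerivAt_px (hf : ContDiff ℝ 1 (fun q : ℝ × ℝ × ℝ => f q.1 q.2.1 q.2.2))
    (t x y : ℝ) : HasDerivAt (fun s => f t s y) (px f t x y) x := by
  have hF := (hf.differentiable one_ne_zero (t, x, y)).hasFDerivAt
  have hline : HasDerivAt (fun s : ℝ => ((t, s, y) : ℝ × ℝ × ℝ)) ((0, 1, 0) : ℝ × ℝ × ℝ) x :=
    (hasDerivAt_const x t).prodMk ((hasDerivAt_id x).prodMk (hasDerivAt_const x y))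
  have h : HasDerivAt (fun s => f t s y)
      (fderiv ℝ (fun q : ℝ × ℝ × ℝ => f q.1 q.2.1 q.2.2) (t, x, y) ((0:ℝ), (1:ℝ), (0:ℝ))) x :=
    by have := hF.comp_hasDerivAt x hline; exact this
  unfold px; rw [h.deriv]; exact h

lemma hasDerivAt_py (hf : ContDiff ℝ 1 (fun q : ℝ × ℝ × ℝ => f q.1 q.2.1 q.2.2))
    (t x y : ℝ) : HasDerivAt (fun s => f t x s) (py f t x y) y := by
  have hF := (hf.differentiable one_ne_zero (t, x, y)).hasFDerivAt
  have hline : HasDerivAt (fun s : ℝ => ((t, x, s) : ℝ × ℝ × ℝ)) ((0, 0, 1) : ℝ × ℝ × ℝ) y :=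
    (hasDerivAt_const y t).prodMk ((hasDerivAt_const y x).prodMk (hasDerivAt_id y))
  have h : HasDerivAt (fun s => f t x s)
      (fderiv ℝ (fun q : ℝ × ℝ × ℝ => f q.1 q.2.1 q.2.2) (t, x, y) ((0:ℝ), (0:ℝ), (1:ℝ))) y :=
    by have := hF.comp_hasDerivAt y hline; exact this
  unfold py; rw [h.deriv]; exact h

lemma hasDerivAt_qx (hg : ContDiff ℝ 1 (fun p : ℝ × ℝ => g p.1 p.2))
    (x y : ℝ) : HasDerivAt (fun s => g s y) (qx g x y) x := by
  have hF := (hg.differentiable one_ne_zero (x, y)).hasFDerivAt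
  have hline : HasDerivAt (fun s : ℝ => ((s, y) : ℝ × ℝ)) ((1, 0) : ℝ × ℝ) x :=
    (hasDerivAt_id x).prodMk (hasDerivAt_const x y)
  have h : HasDerivAt (fun s => g s y)
      (fderiv ℝ (fun p : ℝ × ℝ => g p.1 p.2) (x, y) ((1:ℝ), (0:ℝ))) x :=
    by have := hF.comp_hasDerivAt x hline; exact this
  unfold qx; rw [h.deriv]; exact h

lemma hasDerivAt_qy (hg : ContDiff ℝ 1 (fun p : ℝ × ℝ => g p.1 p.2))
    (x y : ℝ) : HasDerivAt (fun s => g x s) (qy g x y) y := by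
  have hF := (hg.differentiable one_ne_zero (x, y)).hasFDerivAt
  have hline : HasDerivAt (fun s : ℝ => ((x, s) : ℝ × ℝ)) ((0, 1) : ℝ × ℝ) y :=
    (hasDerivAt_const y x).prodMk (hasDerivAt_id y)
  have h : HasDerivAt (fun s => g x s)
      (fderiv ℝ (fun p : ℝ × ℝ => g p.1 p.2) (x, y) ((0:ℝ), (1:ℝ))) y :=
    by have := hF.comp_hasDerivAt y hline; exact this
  unfold qy; rw [h.deriv]; exact h

lemma continuous_pt (hf : ContDiff ℝ 1 (fun q : ℝ × ℝ × ℝ => f q.1 q.2.1 q.2.2)) :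
    Continuous fun q : ℝ × ℝ × ℝ => pt f q.1 q.2.1 q.2.2 := by
  have heq : ∀ q : ℝ × ℝ × ℝ, pt f q.1 q.2.1 q.2.2 =
      fderiv ℝ (fun q : ℝ × ℝ × ℝ => f q.1 q.2.1 q.2.2) q ((1:ℝ), (0:ℝ), (0:ℝ)) := by
    intro ⟨t, x, y⟩
    exact (hasDerivAt_pt hf t x y).unique
      (((hf.differentiable one_ne_zero (t, x, y)).hasFDerivAt).comp_hasDerivAt (f := fun s => ((s, x, y) : ℝ × ℝ × ℝ)) t
        ((hasDerivAt_id t).prodMk ((hasDerivAt_const t x).prodMk (hasDerivAt_const t y))))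
  rw [funext heq]
  exact (hf.continuous_fderiv one_ne_zero).clm_apply continuous_const

lemma continuous_px (hf : ContDiff ℝ 1 (fun q : ℝ × ℝ × ℝ => f q.1 q.2.1 q.2.2)) :
    Continuous fun q : ℝ × ℝ × ℝ => px f q.1 q.2.1 q.2.2 := by
  have heq : ∀ q : ℝ × ℝ × ℝ, px f q.1 q.2.1 q.2.2 =
      fderiv ℝ (fun q : ℝ × ℝ × ℝ => f q.1 q.2.1 q.2.2) q ((0:ℝ), (1:ℝ), (0:ℝ)) := by
    intro ⟨t, x, y⟩
    exact (hasDerivAt_px hf t x y).unique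
      (((hf.differentiable one_ne_zero (t, x, y)).hasFDerivAt).comp_hasDerivAt (f := fun s => ((t, s, y) : ℝ × ℝ × ℝ)) x
        ((hasDerivAt_const x t).prodMk ((hasDerivAt_id x).prodMk (hasDerivAt_const x y))))
  rw [funext heq]
  exact (hf.continuous_fderiv one_ne_zero).clm_apply continuous_const

lemma continuous_py (hf : ContDiff ℝ 1 (fun q : ℝ × ℝ × ℝ => f q.1 q.2.1 q.2.2)) :
    Continuous fun q : ℝ × ℝ × ℝ => py f q.1 q.2.1 q.2.2 := by
  have heq : ∀ q : ℝ × ℝ × ℝ, py f q.1 q.2.1 q.2.2 =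
      fderiv ℝ (fun q : ℝ × ℝ × ℝ => f q.1 q.2.1 q.2.2) q ((0:ℝ), (0:ℝ), (1:ℝ)) := by
    intro ⟨t, x, y⟩
    exact (hasDerivAt_py hf t x y).unique
      (((hf.differentiable one_ne_zero (t, x, y)).hasFDerivAt).comp_hasDerivAt (f := fun s => ((t, x, s) : ℝ × ℝ × ℝ)) y
        ((hasDerivAt_const y t).prodMk ((hasDerivAt_const y x).prodMk (hasDerivAt_id y))))
  rw [funext heq]
  exact (hf.continuous_fderiv one_ne_zero).clm_apply continuous_const

lemma continuous_qx (hg : ContDiff ℝ 1 (fun p : ℝ × ℝ => g p.1 p.2)) :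
    Continuous fun p : ℝ × ℝ => qx g p.1 p.2 := by
  have heq : ∀ p : ℝ × ℝ, qx g p.1 p.2 =
      fderiv ℝ (fun p : ℝ × ℝ => g p.1 p.2) p ((1:ℝ), (0:ℝ)) := by
    intro ⟨x, y⟩
    exact (hasDerivAt_qx hg x y).unique
      (((hg.differentiable one_ne_zero (x, y)).hasFDerivAt).comp_hasDerivAt (f := fun s => ((s, y) : ℝ × ℝ)) x
        ((hasDerivAt_id x).prodMk (hasDerivAt_const x y)))
  rw [funext heq]
  exact (hg.continuous_fderiv one_ne_zero).clm_apply continuous_const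

lemma continuous_qy (hg : ContDiff ℝ 1 (fun p : ℝ × ℝ => g p.1 p.2)) :
    Continuous fun p : ℝ × ℝ => qy g p.1 p.2 := by
  have heq : ∀ p : ℝ × ℝ, qy g p.1 p.2 =
      fderiv ℝ (fun p : ℝ × ℝ => g p.1 p.2) p ((0:ℝ), (1:ℝ)) := by
    intro ⟨x, y⟩
    exact (hasDerivAt_qy hg x y).unique
      (((hg.differentiable one_ne_zero (x, y)).hasFDerivAt).comp_hasDerivAt (f := fun s => ((x, s) : ℝ × ℝ)) y
        ((hasDerivAt_const y x).prodMk (hasDerivAt_id y)))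
  rw [funext heq]
  exact (hg.continuous_fderiv one_ne_zero).clm_apply continuous_const

end helpers

open MeasureTheory Set

def Qbox : Set (ℝ × ℝ) := Set.Icc (0:ℝ) 1 ×ˢ Set.Icc (0:ℝ) 1

lemma integrableOn_box {g : ℝ × ℝ → ℝ} (hg : Continuous g) : IntegrableOn g Qbox :=
  hg.continuousOn.integrableOn_compact (isCompact_Icc.prod isCompact_Icc)

lemma restrict_box_eq : (volume : Measure (ℝ × ℝ)).restrict Qbox
    = ((volume : Measure ℝ).restrict (Icc 0 1)).prod ((volume : Measure ℝ).restrict (Icc 0 1)) := by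
  rw [Measure.volume_eq_prod, Measure.prod_restrict]; rfl

lemma interval_eq_Icc (h : ℝ → ℝ) : (∫ y in (0:ℝ)..1, h y) = ∫ y in Icc (0:ℝ) 1, h y := by
  rw [intervalIntegral.integral_of_le (zero_le_one), ← MeasureTheory.integral_Icc_eq_integral_Ioc]

lemma integral_box {g : ℝ × ℝ → ℝ} (hg : Continuous g) :
    ∫ p in Qbox, g p = ∫ x in (0:ℝ)..1, ∫ y in (0:ℝ)..1, g (x, y) := by
  have hint : Integrable g (((volume : Measure ℝ).restrict (Icc 0 1)).prod
      ((volume : Measure ℝ).restrict (Icc 0 1))) := by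
    rw [← restrict_box_eq]; exact integrableOn_box hg
  rw [show (∫ p in Qbox, g p) = ∫ p, g p ∂(((volume : Measure ℝ).restrict (Icc 0 1)).prod
      ((volume : Measure ℝ).restrict (Icc 0 1))) from by rw [← restrict_box_eq]]
  rw [MeasureTheory.integral_prod g hint, interval_eq_Icc]
  apply setIntegral_congr_fun measurableSet_Icc
  intro x _
  exact (interval_eq_Icc fun y => g (x, y)).symm

lemma integral_box' {g : ℝ × ℝ → ℝ} (hg : Continuous g) :
    ∫ p in Qbox, g p = ∫ y in (0:ℝ)..1, ∫ x in (0:ℝ)..1, g (x, y) := by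
  have hint : Integrable g (((volume : Measure ℝ).restrict (Icc 0 1)).prod
      ((volume : Measure ℝ).restrict (Icc 0 1))) := by
    rw [← restrict_box_eq]; exact integrableOn_box hg
  rw [show (∫ p in Qbox, g p) = ∫ p, g p ∂(((volume : Measure ℝ).restrict (Icc 0 1)).prod
      ((volume : Measure ℝ).restrict (Icc 0 1))) from by rw [← restrict_box_eq]]
  rw [MeasureTheory.integral_prod g hint, MeasureTheory.integral_integral_swap (f := fun x y => g (x, y)) hint, interval_eq_Icc]
  apply setIntegral_congr_fun measurableSet_Icc
  intro y _
  exact (interval_eq_Icc fun x => g (x, y)).symm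

lemma hasDerivAt_param (F F' : ℝ → ℝ × ℝ → ℝ)
    (hF : Continuous fun q : ℝ × ℝ × ℝ => F q.1 q.2)
    (hF' : Continuous fun q : ℝ × ℝ × ℝ => F' q.1 q.2)
    (hd : ∀ s p, HasDerivAt (fun r => F r p) (F' s p) s) (t : ℝ) :
    HasDerivAt (fun s => ∫ p in Qbox, F s p) (∫ p in Qbox, F' t p) t := by
  have hQc : IsCompact Qbox := isCompact_Icc.prod isCompact_Icc
  have hQm : MeasurableSet Qbox := (measurableSet_Icc.prod measurableSet_Icc)
  haveI : IsFiniteMeasure ((volume : Measure (ℝ × ℝ)).restrict Qbox) :=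
    ⟨by rw [Measure.restrict_apply_univ]; exact hQc.measure_lt_top⟩
  obtain ⟨C, hC⟩ := (isCompact_Icc.prod hQc).exists_bound_of_continuousOn
    (s := Set.Icc (t - 1) (t + 1) ×ˢ Qbox) hF'.continuousOn
  have hmem : ∀ᵐ p ∂((volume : Measure (ℝ × ℝ)).restrict Qbox), p ∈ Qbox :=
    ae_restrict_mem hQm
  refine (hasDerivAt_integral_of_dominated_loc_of_deriv_le (s := Metric.ball t 1) (Metric.ball_mem_nhds t one_pos)
    (F := F) (F' := F') (bound := fun _ => C) ?_ ?_ ?_ ?_ ?_ ?_).2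
  · exact Filter.Eventually.of_forall fun s =>
      (hF.comp (continuous_const.prodMk continuous_id)).aestronglyMeasurable
  · exact integrableOn_box (hF.comp (continuous_const.prodMk continuous_id))
  · exact (hF'.comp (continuous_const.prodMk continuous_id)).aestronglyMeasurable
  · refine hmem.mono fun p hp s hs => hC (s, p) ⟨?_, hp⟩
    rw [Metric.mem_ball, Real.dist_eq] at hs
    constructor <;> linarith [abs_lt.mp hs |>.1, abs_lt.mp hs |>.2]
  · exact integrable_const C
  · exact Filter.Eventually.of_forall fun p s _ => hd s p

section maindefs

noncomputable def Ff (σt u₁ u₂ : ℝ → ℝ → ℝ → ℝ) : ℝ → ℝ × ℝ → ℝ :=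
  fun s p => σt s p.1 p.2 ^ 2 + (u₁ s p.1 p.2 ^ 2 + u₂ s p.1 p.2 ^ 2)

noncomputable def Fp (σt u₁ u₂ : ℝ → ℝ → ℝ → ℝ) : ℝ → ℝ × ℝ → ℝ :=
  fun s p => 2 * σt s p.1 p.2 * pt σt s p.1 p.2 +
    (2 * u₁ s p.1 p.2 * pt u₁ s p.1 p.2 + 2 * u₂ s p.1 p.2 * pt u₂ s p.1 p.2)

noncomputable def g0f (u₁ u₂ : ℝ → ℝ → ℝ → ℝ) (t : ℝ) : ℝ × ℝ → ℝ :=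
  fun p => u₁ t p.1 p.2 ^ 2 + u₂ t p.1 p.2 ^ 2

noncomputable def g1f (σt u₁ u₂ : ℝ → ℝ → ℝ → ℝ) (t : ℝ) : ℝ × ℝ → ℝ :=
  fun p => σt t p.1 p.2 * (u₁ t p.1 p.2 * px σt t p.1 p.2 + u₂ t p.1 p.2 * py σt t p.1 p.2)

noncomputable def g2f (σt u₁ u₂ : ℝ → ℝ → ℝ → ℝ) (σh : ℝ → ℝ → ℝ) (t : ℝ) : ℝ × ℝ → ℝ :=
  fun p => (u₁ t p.1 p.2 * qx σh p.1 p.2 + u₂ t p.1 p.2 * qy σh p.1 p.2) * σt t p.1 p.2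

noncomputable def g3f (σt u₁ u₂ : ℝ → ℝ → ℝ → ℝ) (t : ℝ) : ℝ × ℝ → ℝ :=
  fun p => (px u₁ t p.1 p.2 + py u₂ t p.1 p.2) * σt t p.1 p.2 ^ 2

noncomputable def g4f (u₁ u₂ : ℝ → ℝ → ℝ → ℝ) (t : ℝ) : ℝ × ℝ → ℝ :=
  fun p => (px u₁ t p.1 p.2 + py u₂ t p.1 p.2) * (u₁ t p.1 p.2 ^ 2 + u₂ t p.1 p.2 ^ 2)

noncomputable def g5f (φt u₁ u₂ : ℝ → ℝ → ℝ → ℝ) (t : ℝ) : ℝ × ℝ → ℝ :=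
  fun p => u₁ t p.1 p.2 * px φt t p.1 p.2 + u₂ t p.1 p.2 * py φt t p.1 p.2

noncomputable def DXf (σt u₁ u₂ : ℝ → ℝ → ℝ → ℝ) (σh : ℝ → ℝ → ℝ) (t : ℝ) : ℝ × ℝ → ℝ :=
  fun p =>
    (4 * σt t p.1 p.2 * px σt t p.1 p.2 +
      (qx σh p.1 p.2 * σt t p.1 p.2 + σh p.1 p.2 * px σt t p.1 p.2) +
      (2 * u₁ t p.1 p.2 * px u₁ t p.1 p.2 + 2 * u₂ t p.1 p.2 * px u₂ t p.1 p.2)) * u₁ t p.1 p.2 +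
    (2 * σt t p.1 p.2 ^ 2 + σh p.1 p.2 * σt t p.1 p.2 +
      (u₁ t p.1 p.2 ^ 2 + u₂ t p.1 p.2 ^ 2)) * px u₁ t p.1 p.2

noncomputable def DYf (σt u₁ u₂ : ℝ → ℝ → ℝ → ℝ) (σh : ℝ → ℝ → ℝ) (t : ℝ) : ℝ × ℝ → ℝ :=
  fun p =>
    (4 * σt t p.1 p.2 * py σt t p.1 p.2 +
      (qy σh p.1 p.2 * σt t p.1 p.2 + σh p.1 p.2 * py σt t p.1 p.2) +
      (2 * u₁ t p.1 p.2 * py u₁ t p.1 p.2 + 2 * u₂ t p.1 p.2 * py u₂ t p.1 p.2)) * u₂ t p.1 p.2 +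
    (2 * σt t p.1 p.2 ^ 2 + σh p.1 p.2 * σt t p.1 p.2 +
      (u₁ t p.1 p.2 ^ 2 + u₂ t p.1 p.2 ^ 2)) * py u₂ t p.1 p.2

noncomputable def KK (α β : ℝ) (σt φt u₁ u₂ : ℝ → ℝ → ℝ → ℝ) (σh : ℝ → ℝ → ℝ) (t : ℝ) :
    ℝ × ℝ → ℝ :=
  fun p => -(2 * α) * g0f u₁ u₂ t p +
    (g1f σt u₁ u₂ t p - 2 * g2f σt u₁ u₂ σh t p + g3f σt u₁ u₂ t p + g4f u₁ u₂ t p +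
      2 * β * g5f φt u₁ u₂ t p)

end maindefs


open MeasureTheory Set

/-- The zeroth-order energy balance for the sound-speed-transformed perturbation
equations of the vasculogenesis model with quadratic pressure on the unit square with
no-normal-flow boundary conditions: testing the continuity equation with `σ̃` and the
momentum equation with `u` and integrating by parts. -/
theorem zeroth_order_energy_balance
    (α β : ℝ)
    (σt φt u₁ u₂ : ℝ → ℝ → ℝ → ℝ) (σh : ℝ → ℝ → ℝ)
    (hσt : ContDiff ℝ 1 (fun q : ℝ × ℝ × ℝ => σt q.1 q.2.1 q.2.2))
    (hφt : ContDiff ℝ 1 (fun q : ℝ × ℝ × ℝ => φt q.1 q.2.1 q.2.2))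
    (hu₁ : ContDiff ℝ 1 (fun q : ℝ × ℝ × ℝ => u₁ q.1 q.2.1 q.2.2))
    (hu₂ : ContDiff ℝ 1 (fun q : ℝ × ℝ × ℝ => u₂ q.1 q.2.1 q.2.2))
    (hσh : ContDiff ℝ 1 (fun p : ℝ × ℝ => σh p.1 p.2))
    -- (i) transformed continuity equation on ℝ × Q
    (hi : ∀ (t : ℝ), ∀ x ∈ Set.Icc (0:ℝ) 1, ∀ y ∈ Set.Icc (0:ℝ) 1,
      2 * pt σt t x y + 2 * (u₁ t x y * px σt t x y + u₂ t x y * py σt t x y) +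
        σt t x y * (px u₁ t x y + py u₂ t x y) +
        2 * (u₁ t x y * qx σh x y + u₂ t x y * qy σh x y) +
        σh x y * (px u₁ t x y + py u₂ t x y) = 0)
    -- (ii) transformed momentum equation on ℝ × Q
    (hii₁ : ∀ (t : ℝ), ∀ x ∈ Set.Icc (0:ℝ) 1, ∀ y ∈ Set.Icc (0:ℝ) 1,
      2 * pt u₁ t x y + 2 * (u₁ t x y * px u₁ t x y + u₂ t x y * py u₁ t x y) +
        σt t x y * px σt t x y + σt t x y * qx σh x y + σh x y * px σt t x y
        = -2 * α * u₁ t x y + 2 * β * px φt t x y)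
    (hii₂ : ∀ (t : ℝ), ∀ x ∈ Set.Icc (0:ℝ) 1, ∀ y ∈ Set.Icc (0:ℝ) 1,
      2 * pt u₂ t x y + 2 * (u₁ t x y * px u₂ t x y + u₂ t x y * py u₂ t x y) +
        σt t x y * py σt t x y + σt t x y * qy σh x y + σh x y * py σt t x y
        = -2 * α * u₂ t x y + 2 * β * py φt t x y)
    -- no-normal-flow boundary condition
    (hbc₁ : ∀ t : ℝ, ∀ y ∈ Set.Icc (0:ℝ) 1, u₁ t 0 y = 0 ∧ u₁ t 1 y = 0)
    (hbc₂ : ∀ t : ℝ, ∀ x ∈ Set.Icc (0:ℝ) 1, u₂ t x 0 = 0 ∧ u₂ t x 1 = 0) :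
    ∀ t : ℝ, HasDerivAt
      (fun s => ∫ x in (0:ℝ)..1, ∫ y in (0:ℝ)..1,
        (σt s x y) ^ 2 + ((u₁ s x y) ^ 2 + (u₂ s x y) ^ 2))
      (-(2 * α) * (∫ x in (0:ℝ)..1, ∫ y in (0:ℝ)..1,
          (u₁ t x y) ^ 2 + (u₂ t x y) ^ 2) +
        ((∫ x in (0:ℝ)..1, ∫ y in (0:ℝ)..1,
          σt t x y * (u₁ t x y * px σt t x y + u₂ t x y * py σt t x y)) -
        2 * (∫ x in (0:ℝ)..1, ∫ y in (0:ℝ)..1,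
          (u₁ t x y * qx σh x y + u₂ t x y * qy σh x y) * σt t x y) +
        (∫ x in (0:ℝ)..1, ∫ y in (0:ℝ)..1,
          (px u₁ t x y + py u₂ t x y) * (σt t x y) ^ 2) +
        (∫ x in (0:ℝ)..1, ∫ y in (0:ℝ)..1,
          (px u₁ t x y + py u₂ t x y) * ((u₁ t x y) ^ 2 + (u₂ t x y) ^ 2)) +
        2 * β * ∫ x in (0:ℝ)..1, ∫ y in (0:ℝ)..1,
          u₁ t x y * px φt t x y + u₂ t x y * py φt t x y)) t := by
  intro t
  have hemb : ∀ s : ℝ, Continuous fun p : ℝ × ℝ => ((s, p) : ℝ × ℝ × ℝ) :=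
    fun s => continuous_const.prodMk continuous_id
  have Cσ : Continuous fun p : ℝ × ℝ => σt t p.1 p.2 := hσt.continuous.comp (hemb t)
  have Cu₁ : Continuous fun p : ℝ × ℝ => u₁ t p.1 p.2 := hu₁.continuous.comp (hemb t)
  have Cu₂ : Continuous fun p : ℝ × ℝ => u₂ t p.1 p.2 := hu₂.continuous.comp (hemb t)
  have Cσh : Continuous fun p : ℝ × ℝ => σh p.1 p.2 := hσh.continuous
  have Cpxσ : Continuous fun p : ℝ × ℝ => px σt t p.1 p.2 := (continuous_px hσt).comp (hemb t)
  have Cpyσ : Continuous fun p : ℝ × ℝ => py σt t p.1 p.2 := (continuous_py hσt).comp (hemb t)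
  have Cpxu₁ : Continuous fun p : ℝ × ℝ => px u₁ t p.1 p.2 := (continuous_px hu₁).comp (hemb t)
  have Cpyu₁ : Continuous fun p : ℝ × ℝ => py u₁ t p.1 p.2 := (continuous_py hu₁).comp (hemb t)
  have Cpxu₂ : Continuous fun p : ℝ × ℝ => px u₂ t p.1 p.2 := (continuous_px hu₂).comp (hemb t)
  have Cpyu₂ : Continuous fun p : ℝ × ℝ => py u₂ t p.1 p.2 := (continuous_py hu₂).comp (hemb t)
  have Cpxφ : Continuous fun p : ℝ × ℝ => px φt t p.1 p.2 := (continuous_px hφt).comp (hemb t)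
  have Cpyφ : Continuous fun p : ℝ × ℝ => py φt t p.1 p.2 := (continuous_py hφt).comp (hemb t)
  have Cqx : Continuous fun p : ℝ × ℝ => qx σh p.1 p.2 := continuous_qx hσh
  have Cqy : Continuous fun p : ℝ × ℝ => qy σh p.1 p.2 := continuous_qy hσh
  have c0 : Continuous (g0f u₁ u₂ t) := by
    unfold g0f; exact (Cu₁.pow 2).add (Cu₂.pow 2)
  have c1 : Continuous (g1f σt u₁ u₂ t) := by
    unfold g1f; exact Cσ.mul ((Cu₁.mul Cpxσ).add (Cu₂.mul Cpyσ))
  have c2 : Continuous (g2f σt u₁ u₂ σh t) := by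
    unfold g2f; exact ((Cu₁.mul Cqx).add (Cu₂.mul Cqy)).mul Cσ
  have c3 : Continuous (g3f σt u₁ u₂ t) := by
    unfold g3f; exact (Cpxu₁.add Cpyu₂).mul (Cσ.pow 2)
  have c4 : Continuous (g4f u₁ u₂ t) := by
    unfold g4f; exact (Cpxu₁.add Cpyu₂).mul ((Cu₁.pow 2).add (Cu₂.pow 2))
  have c5 : Continuous (g5f φt u₁ u₂ t) := by
    unfold g5f; exact (Cu₁.mul Cpxφ).add (Cu₂.mul Cpyφ)
  have cDX : Continuous (DXf σt u₁ u₂ σh t) := by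
    unfold DXf
    exact (((((continuous_const.mul Cσ).mul Cpxσ).add
      ((Cqx.mul Cσ).add (Cσh.mul Cpxσ))).add
      (((continuous_const.mul Cu₁).mul Cpxu₁).add
        ((continuous_const.mul Cu₂).mul Cpxu₂))).mul Cu₁).add
      ((((continuous_const.mul (Cσ.pow 2)).add (Cσh.mul Cσ)).add
        ((Cu₁.pow 2).add (Cu₂.pow 2))).mul Cpxu₁)
  have cDY : Continuous (DYf σt u₁ u₂ σh t) := by
    unfold DYf
    exact (((((continuous_const.mul Cσ).mul Cpyσ).add
      ((Cqy.mul Cσ).add (Cσh.mul Cpyσ))).add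
      (((continuous_const.mul Cu₁).mul Cpyu₁).add
        ((continuous_const.mul Cu₂).mul Cpyu₂))).mul Cu₂).add
      ((((continuous_const.mul (Cσ.pow 2)).add (Cσh.mul Cσ)).add
        ((Cu₁.pow 2).add (Cu₂.pow 2))).mul Cpyu₂)
  have cK : Continuous (KK α β σt φt u₁ u₂ σh t) := by
    unfold KK
    exact (continuous_const.mul c0).add
      ((((c1.sub (continuous_const.mul c2)).add c3).add c4).add (continuous_const.mul c5))
  have hQm : MeasurableSet Qbox := measurableSet_Icc.prod measurableSet_Icc
  have i0 : IntegrableOn (g0f u₁ u₂ t) Qbox := integrableOn_box c0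
  have i1 : IntegrableOn (g1f σt u₁ u₂ t) Qbox := integrableOn_box c1
  have i2 : IntegrableOn (g2f σt u₁ u₂ σh t) Qbox := integrableOn_box c2
  have i3 : IntegrableOn (g3f σt u₁ u₂ t) Qbox := integrableOn_box c3
  have i4 : IntegrableOn (g4f u₁ u₂ t) Qbox := integrableOn_box c4
  have i5 : IntegrableOn (g5f φt u₁ u₂ t) Qbox := integrableOn_box c5
  have iDx : IntegrableOn (DXf σt u₁ u₂ σh t) Qbox := integrableOn_box cDX
  have iDy : IntegrableOn (DYf σt u₁ u₂ σh t) Qbox := integrableOn_box cDY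
  have iK : IntegrableOn (KK α β σt φt u₁ u₂ σh t) Qbox := integrableOn_box cK
  -- the derivative of the energy, via differentiation under the integral sign
  have cF : Continuous fun q : ℝ × ℝ × ℝ => Ff σt u₁ u₂ q.1 q.2 := by
    unfold Ff
    exact (hσt.continuous.pow 2).add ((hu₁.continuous.pow 2).add (hu₂.continuous.pow 2))
  have cFp : Continuous fun q : ℝ × ℝ × ℝ => Fp σt u₁ u₂ q.1 q.2 := by
    unfold Fp
    exact ((continuous_const.mul hσt.continuous).mul (continuous_pt hσt)).add
      (((continuous_const.mul hu₁.continuous).mul (continuous_pt hu₁)).add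
        ((continuous_const.mul hu₂.continuous).mul (continuous_pt hu₂)))
  have hd : ∀ s p, HasDerivAt (fun r => Ff σt u₁ u₂ r p) (Fp σt u₁ u₂ s p) s := by
    intro s p
    have h1 := (hasDerivAt_pt hσt s p.1 p.2).pow 2
    have h2 := (hasDerivAt_pt hu₁ s p.1 p.2).pow 2
    have h3 := (hasDerivAt_pt hu₂ s p.1 p.2).pow 2
    have h : HasDerivAt (fun r => Ff σt u₁ u₂ r p)
        ((2:ℕ) * σt s p.1 p.2 ^ (2-1) * pt σt s p.1 p.2 +
          ((2:ℕ) * u₁ s p.1 p.2 ^ (2-1) * pt u₁ s p.1 p.2 +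
           (2:ℕ) * u₂ s p.1 p.2 ^ (2-1) * pt u₂ s p.1 p.2)) s := h1.add (h2.add h3)
    refine h.congr_deriv ?_
    simp only [Fp]; push_cast; ring
  have key : HasDerivAt (fun s => ∫ p in Qbox, Ff σt u₁ u₂ s p)
      (∫ p in Qbox, Fp σt u₁ u₂ t p) t := hasDerivAt_param _ _ cF cFp hd t
  -- the boundary terms vanish
  have hDx0 : (∫ p in Qbox, DXf σt u₁ u₂ σh t p) = 0 := by
    rw [integral_box' cDX]
    have hz : ∀ y ∈ Set.uIcc (0:ℝ) 1,
        (∫ x in (0:ℝ)..1, DXf σt u₁ u₂ σh t (x, y)) = (fun _ : ℝ => (0:ℝ)) y := by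
      intro y hy
      rw [Set.uIcc_of_le zero_le_one] at hy
      have hprim : ∀ x ∈ Set.uIcc (0:ℝ) 1, HasDerivAt
          (fun s => (2 * σt t s y ^ 2 + σh s y * σt t s y +
            (u₁ t s y ^ 2 + u₂ t s y ^ 2)) * u₁ t s y)
          (DXf σt u₁ u₂ σh t (x, y)) x := by
        intro x _
        have h1 := hasDerivAt_px hσt t x y
        have h2 := hasDerivAt_qx hσh x y
        have h3 := hasDerivAt_px hu₁ t x y
        have h4 := hasDerivAt_px hu₂ t x y
        have h := (((HasDerivAt.const_mul (2:ℝ) (h1.fun_pow 2)).fun_add (h2.fun_mul h1)).fun_add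
          ((h3.fun_pow 2).fun_add (h4.fun_pow 2))).fun_mul h3
        refine h.congr_deriv ?_
        simp only [DXf]; push_cast; ring
      have hint : IntervalIntegrable (fun x => DXf σt u₁ u₂ σh t (x, y)) volume 0 1 :=
        (cDX.comp (continuous_id.prodMk continuous_const)).intervalIntegrable 0 1
      rw [intervalIntegral.integral_eq_sub_of_hasDerivAt hprim hint]
      have hb := hbc₁ t y hy
      rw [hb.1, hb.2]; ring
    rw [intervalIntegral.integral_congr hz]
    simp
  have hDy0 : (∫ p in Qbox, DYf σt u₁ u₂ σh t p) = 0 := by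
    rw [integral_box cDY]
    have hz : ∀ x ∈ Set.uIcc (0:ℝ) 1,
        (∫ y in (0:ℝ)..1, DYf σt u₁ u₂ σh t (x, y)) = (fun _ : ℝ => (0:ℝ)) x := by
      intro x hx
      rw [Set.uIcc_of_le zero_le_one] at hx
      have hprim : ∀ y ∈ Set.uIcc (0:ℝ) 1, HasDerivAt
          (fun s => (2 * σt t x s ^ 2 + σh x s * σt t x s +
            (u₁ t x s ^ 2 + u₂ t x s ^ 2)) * u₂ t x s)
          (DYf σt u₁ u₂ σh t (x, y)) y := by
        intro y _
        have h1 := hasDerivAt_py hσt t x y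
        have h2 := hasDerivAt_qy hσh x y
        have h3 := hasDerivAt_py hu₁ t x y
        have h4 := hasDerivAt_py hu₂ t x y
        have h := (((HasDerivAt.const_mul (2:ℝ) (h1.fun_pow 2)).fun_add (h2.fun_mul h1)).fun_add
          ((h3.fun_pow 2).fun_add (h4.fun_pow 2))).fun_mul h4
        refine h.congr_deriv ?_
        simp only [DYf]; push_cast; ring
      have hint : IntervalIntegrable (fun y => DYf σt u₁ u₂ σh t (x, y)) volume 0 1 :=
        (cDY.comp (continuous_const.prodMk continuous_id)).intervalIntegrable 0 1
      rw [intervalIntegral.integral_eq_sub_of_hasDerivAt hprim hint]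
      have hb := hbc₂ t x hx
      rw [hb.1, hb.2]; ring
    rw [intervalIntegral.integral_congr hz]
    simp
  -- the pointwise energy identity from the PDE
  have hpoint : Set.EqOn (fun p : ℝ × ℝ => Fp σt u₁ u₂ t p)
      (fun p : ℝ × ℝ => KK α β σt φt u₁ u₂ σh t p - DXf σt u₁ u₂ σh t p - DYf σt u₁ u₂ σh t p)
      Qbox := by
    intro p hp
    have h1 := hi t p.1 hp.1 p.2 hp.2
    have h2 := hii₁ t p.1 hp.1 p.2 hp.2
    have h3 := hii₂ t p.1 hp.1 p.2 hp.2
    simp only [Fp, KK, g0f, g1f, g2f, g3f, g4f, g5f, DXf, DYf]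
    linear_combination σt t p.1 p.2 * h1 + u₁ t p.1 p.2 * h2 + u₂ t p.1 p.2 * h3
  have iKDx : IntegrableOn
      (fun p => KK α β σt φt u₁ u₂ σh t p - DXf σt u₁ u₂ σh t p) Qbox := iK.sub iDx
  have hsplit : (∫ p in Qbox, Fp σt u₁ u₂ t p) = ∫ p in Qbox, KK α β σt φt u₁ u₂ σh t p := by
    rw [setIntegral_congr_fun hQm hpoint, integral_sub iKDx iDy,
      integral_sub iK iDx, hDx0, hDy0, sub_zero, sub_zero]
  have hKsplit : (∫ p in Qbox, KK α β σt φt u₁ u₂ σh t p)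
      = -(2 * α) * (∫ p in Qbox, g0f u₁ u₂ t p) +
        ((∫ p in Qbox, g1f σt u₁ u₂ t p) - 2 * (∫ p in Qbox, g2f σt u₁ u₂ σh t p) +
         (∫ p in Qbox, g3f σt u₁ u₂ t p) + (∫ p in Qbox, g4f u₁ u₂ t p) +
         2 * β * (∫ p in Qbox, g5f φt u₁ u₂ t p)) := by
    have j0 : IntegrableOn (fun p => -(2 * α) * g0f u₁ u₂ t p) Qbox := i0.const_mul _
    have j2 : IntegrableOn (fun p => 2 * g2f σt u₁ u₂ σh t p) Qbox := i2.const_mul _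
    have j5 : IntegrableOn (fun p => 2 * β * g5f φt u₁ u₂ t p) Qbox := i5.const_mul _
    have jA : IntegrableOn
        (fun p => g1f σt u₁ u₂ t p - 2 * g2f σt u₁ u₂ σh t p) Qbox := i1.sub j2
    have jB : IntegrableOn
        (fun p => g1f σt u₁ u₂ t p - 2 * g2f σt u₁ u₂ σh t p + g3f σt u₁ u₂ t p) Qbox :=
      jA.add i3
    have jC : IntegrableOn
        (fun p => g1f σt u₁ u₂ t p - 2 * g2f σt u₁ u₂ σh t p + g3f σt u₁ u₂ t p +
          g4f u₁ u₂ t p) Qbox := jB.add i4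
    have jD : IntegrableOn
        (fun p => g1f σt u₁ u₂ t p - 2 * g2f σt u₁ u₂ σh t p + g3f σt u₁ u₂ t p +
          g4f u₁ u₂ t p + 2 * β * g5f φt u₁ u₂ t p) Qbox := jC.add j5
    unfold KK
    rw [integral_add j0 jD, integral_add jC j5, integral_add jB i4, integral_add jA i3,
      integral_sub i1 j2, integral_const_mul, integral_const_mul, integral_const_mul]
  -- rewrite the iterated integrals as box integrals
  have e0 : (∫ x in (0:ℝ)..1, ∫ y in (0:ℝ)..1, (u₁ t x y) ^ 2 + (u₂ t x y) ^ 2)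
      = ∫ p in Qbox, g0f u₁ u₂ t p := (integral_box c0).symm
  have e1 : (∫ x in (0:ℝ)..1, ∫ y in (0:ℝ)..1,
      σt t x y * (u₁ t x y * px σt t x y + u₂ t x y * py σt t x y))
      = ∫ p in Qbox, g1f σt u₁ u₂ t p := (integral_box c1).symm
  have e2 : (∫ x in (0:ℝ)..1, ∫ y in (0:ℝ)..1,
      (u₁ t x y * qx σh x y + u₂ t x y * qy σh x y) * σt t x y)
      = ∫ p in Qbox, g2f σt u₁ u₂ σh t p := (integral_box c2).symm
  have e3 : (∫ x in (0:ℝ)..1, ∫ y in (0:ℝ)..1,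
      (px u₁ t x y + py u₂ t x y) * (σt t x y) ^ 2)
      = ∫ p in Qbox, g3f σt u₁ u₂ t p := (integral_box c3).symm
  have e4 : (∫ x in (0:ℝ)..1, ∫ y in (0:ℝ)..1,
      (px u₁ t x y + py u₂ t x y) * ((u₁ t x y) ^ 2 + (u₂ t x y) ^ 2))
      = ∫ p in Qbox, g4f u₁ u₂ t p := (integral_box c4).symm
  have e5 : (∫ x in (0:ℝ)..1, ∫ y in (0:ℝ)..1,
      u₁ t x y * px φt t x y + u₂ t x y * py φt t x y)
      = ∫ p in Qbox, g5f φt u₁ u₂ t p := (integral_box c5).symm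
  have hfun : (fun s => ∫ x in (0:ℝ)..1, ∫ y in (0:ℝ)..1,
      (σt s x y) ^ 2 + ((u₁ s x y) ^ 2 + (u₂ s x y) ^ 2))
      = fun s => ∫ p in Qbox, Ff σt u₁ u₂ s p :=
    funext fun s => (integral_box (cF.comp (hemb s))).symm
  rw [hfun, e0, e1, e2, e3, e4, e5, ← hKsplit, ← hsplit]
  exact key
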